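/- Rotation symmetry of the qubit control system: let η ∈ ℝ and let q : ℝ → ℍ, q(t) = q0(t) + q1(t) e1 + q2(t) e2 + q3(t) e3, be a differentiable solution of q'(t) = (u1(t) e1 + u2(t) e2) · q(t) on an interval I. Then the curve t ↦ q0(t) + (cos η · q1(t) − sin η · q2(t)) e1 + (sin η · q1(t) + cos η · q2(t)) e2 + q3(t) e3 is a solution of the same equation on I with controls ũ1(t) = cos η · u1(t) − sin η · u2(t) and ũ2(t) = sin η · u1(t) + cos η · u2(t). -/

import Mathlib

open Quaternion Set

/-- The imaginary quaternion unit `i`. -/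
noncomputable def e1 : ℍ[ℝ] := ⟨0, 1, 0, 0⟩
/-- The imaginary quaternion unit `j`. -/
noncomputable def e2 : ℍ[ℝ] := ⟨0, 0, 1, 0⟩
/-- The imaginary quaternion unit `k`. -/
noncomputable def e3 : ℍ[ℝ] := ⟨0, 0, 0, 1⟩

/-- `qexp φ = exp (φ e1) = cos φ + (sin φ) e1`. -/
noncomputable def qexp (φ : ℝ) : ℍ[ℝ] :=
  (Real.cos φ : ℍ[ℝ]) + (Real.sin φ : ℍ[ℝ]) * e1

lemma comb (a b c d : ℝ) :
    ((a : ℝ) : ℍ[ℝ]) + ((b : ℝ) : ℍ[ℝ]) * e1 + ((c : ℝ) : ℍ[ℝ]) * e2 +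
      ((d : ℝ) : ℍ[ℝ]) * e3 = (⟨a, b, c, d⟩ : ℍ[ℝ]) := by
  ext <;> simp [Quaternion.re_mul, Quaternion.imI_mul, Quaternion.imJ_mul, Quaternion.imK_mul] <;> simp [e1, e2, e3]

noncomputable def rotL (η : ℝ) : ℍ[ℝ] →ₗ[ℝ] ℍ[ℝ] where
  toFun x := ⟨x.re, Real.cos η * x.imI - Real.sin η * x.imJ,
    Real.sin η * x.imI + Real.cos η * x.imJ, x.imK⟩
  map_add' x y := by
    rw [← comb, ← comb, ← comb]
    ext <;> simp [Quaternion.re_mul, Quaternion.imI_mul, Quaternion.imJ_mul, Quaternion.imK_mul] <;> simp [e1, e2, e3] <;> ring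
  map_smul' c x := by
    rw [← comb, ← comb]
    ext <;> simp [Quaternion.re_mul, Quaternion.imI_mul, Quaternion.imJ_mul, Quaternion.imK_mul] <;> simp [e1, e2, e3] <;> ring

lemma rotL_re (η : ℝ) (p : ℍ[ℝ]) : (rotL η p).re = p.re := rfl
lemma rotL_imI (η : ℝ) (p : ℍ[ℝ]) :
    (rotL η p).imI = Real.cos η * p.imI - Real.sin η * p.imJ := rfl
lemma rotL_imJ (η : ℝ) (p : ℍ[ℝ]) :
    (rotL η p).imJ = Real.sin η * p.imI + Real.cos η * p.imJ := rfl
lemma rotL_imK (η : ℝ) (p : ℍ[ℝ]) : (rotL η p).imK = p.imK := rfl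

lemma rotL_key (η a b c d v w : ℝ) :
    ((⟨0, Real.cos η * v - Real.sin η * w, Real.sin η * v + Real.cos η * w, 0⟩ : ℍ[ℝ]) *
      (⟨a, Real.cos η * b - Real.sin η * c, Real.sin η * b + Real.cos η * c, d⟩ : ℍ[ℝ])) =
      rotL η ((⟨0, v, w, 0⟩ : ℍ[ℝ]) * (⟨a, b, c, d⟩ : ℍ[ℝ])) := by
  have hsc := Real.sin_sq_add_cos_sq η
  rw [← comb, ← comb, ← comb, ← comb]
  show ((_ : ℍ[ℝ]) * (_ : ℍ[ℝ])) = rotL η ((_ : ℍ[ℝ]) * (_ : ℍ[ℝ]))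
  apply Quaternion.ext <;>
    simp [Quaternion.re_mul, Quaternion.imI_mul, Quaternion.imJ_mul, Quaternion.imK_mul, rotL_re, rotL_imI, rotL_imJ, rotL_imK] <;> simp [e1, e2, e3] <;>
    first
      | linear_combination (-(v * b) - w * c) * hsc
      | linear_combination (v * c - w * b) * hsc
      | nlinarith [hsc]

theorem stmt_6
    (η : ℝ) (I : Set ℝ) (hI : I.OrdConnected)
    (q0 q1 q2 q3 u1 u2 : ℝ → ℝ)
    (q : ℝ → ℍ[ℝ])
    (hqdef : ∀ t, q t =
      ((q0 t : ℝ) : ℍ[ℝ]) + ((q1 t : ℝ) : ℍ[ℝ]) * e1 +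
        ((q2 t : ℝ) : ℍ[ℝ]) * e2 + ((q3 t : ℝ) : ℍ[ℝ]) * e3)
    (hq : ∀ t ∈ I,
      HasDerivAt q ((((u1 t : ℝ) : ℍ[ℝ]) * e1 + ((u2 t : ℝ) : ℍ[ℝ]) * e2) * q t) t) :
    ∀ t ∈ I,
      HasDerivAt
        (fun s => ((q0 s : ℝ) : ℍ[ℝ]) +
          (((Real.cos η * q1 s - Real.sin η * q2 s) : ℝ) : ℍ[ℝ]) * e1 +
          (((Real.sin η * q1 s + Real.cos η * q2 s) : ℝ) : ℍ[ℝ]) * e2 +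
          ((q3 s : ℝ) : ℍ[ℝ]) * e3)
        (((((Real.cos η * u1 t - Real.sin η * u2 t) : ℝ) : ℍ[ℝ]) * e1 +
          (((Real.sin η * u1 t + Real.cos η * u2 t) : ℝ) : ℍ[ℝ]) * e2) *
          (((q0 t : ℝ) : ℍ[ℝ]) +
            (((Real.cos η * q1 t - Real.sin η * q2 t) : ℝ) : ℍ[ℝ]) * e1 +
            (((Real.sin η * q1 t + Real.cos η * q2 t) : ℝ) : ℍ[ℝ]) * e2 +
            ((q3 t : ℝ) : ℍ[ℝ]) * e3)) t := by
  intro t ht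
  have hu : ∀ v w : ℝ, ((v : ℝ) : ℍ[ℝ]) * e1 + ((w : ℝ) : ℍ[ℝ]) * e2 =
      (⟨0, v, w, 0⟩ : ℍ[ℝ]) := by
    intro v w; ext <;> simp [Quaternion.re_mul, Quaternion.imI_mul, Quaternion.imJ_mul, Quaternion.imK_mul] <;> simp [e1, e2]
  have hfun : (fun s => ((q0 s : ℝ) : ℍ[ℝ]) +
          (((Real.cos η * q1 s - Real.sin η * q2 s) : ℝ) : ℍ[ℝ]) * e1 +
          (((Real.sin η * q1 s + Real.cos η * q2 s) : ℝ) : ℍ[ℝ]) * e2 +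
          ((q3 s : ℝ) : ℍ[ℝ]) * e3) = fun s => rotL η (q s) := by
    funext s
    rw [comb, hqdef s, comb]
    rfl
  rw [hfun]
  have hD := ((rotL η).toContinuousLinearMap.hasFDerivAt).comp_hasDerivAt t (hq t ht)
  refine hD.congr_deriv ?_
  show rotL η _ = _
  rw [comb, hu, hu, hqdef t, comb]
  exact (rotL_key η _ _ _ _ _ _).symm
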